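/- Let X ⫫ Y | Z with X categorical on {1,...,k} and Y ordinal, and define for each j ∈ {1,...,k−1} the product D_j = R_{I(X=j)} · R_Y of the conditional LS residuals of the indicator 1{X=j} and of Y given Z. Then the vector D = (D_1,...,D_{k−1}) has mean zero: E[D_j] = 0 for every j. -/
import Mathlib


open Finset

/-- If `X ⫫ Y ∣ Z` with `X` categorical and `Y` ordinal, then each product
`D_j = (1{X = j} - P(X = j ∣ Z)) · R_Y` of the conditional residual of the indicator `1{X = j}`
with the conditional LS residual of `Y` has mean zero. -/
theorem indicator_ls_residual_product_zero
    {Ω γ : Type} [Fintype Ω] [DecidableEq γ] {k r : ℕ}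
    (w : Ω → ℝ) (hw : ∀ ω, 0 ≤ w ω) (hw1 : ∑ ω, w ω = 1)
    (X : Ω → Fin k) (Y : Ω → Fin r) (Z : Ω → γ)
    (hCI : ∀ (x : Fin k) (y : Fin r) (z : γ),
      (∑ ω, if X ω = x ∧ Y ω = y ∧ Z ω = z then w ω else 0)
          * (∑ ω, if Z ω = z then w ω else 0)
        = (∑ ω, if X ω = x ∧ Z ω = z then w ω else 0)
          * (∑ ω, if Y ω = y ∧ Z ω = z then w ω else 0))
    (q : Fin k → γ → ℝ)
    (hq : ∀ j z, q j z =
      (∑ ω, if X ω = j ∧ Z ω = z then w ω else 0) / (∑ ω, if Z ω = z then w ω else 0))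
    (RY : Fin r → γ → ℝ)
    (hRY : ∀ y z, RY y z =
      ((∑ ω, if Y ω < y ∧ Z ω = z then w ω else 0)
        - (∑ ω, if y < Y ω ∧ Z ω = z then w ω else 0)) / (∑ ω, if Z ω = z then w ω else 0)) :
    ∀ j : Fin k,
      ∑ ω, w ω * (((if X ω = j then (1 : ℝ) else 0) - q j (Z ω)) * RY (Y ω) (Z ω)) = 0 := by
  intro j
  classical
  -- the z-fiber sums all vanish
  have fiber : ∀ z : γ,
      ∑ ω, (if Z ω = z then
        w ω * (((if X ω = j then (1 : ℝ) else 0) - q j z) * RY (Y ω) z) else 0) = 0 := by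
    intro z
    by_cases h0 : (∑ ω, if Z ω = z then w ω else 0) = 0
    · have hz : ∀ ω, Z ω = z → w ω = 0 := by
        intro ω hωz
        have h := (Finset.sum_eq_zero_iff_of_nonneg
          (fun ω _ => by split_ifs with h; exacts [hw ω, le_refl 0])).mp h0 ω (mem_univ ω)
        simpa [hωz] using h
      refine Finset.sum_eq_zero fun ω _ => ?_
      by_cases h : Z ω = z
      · simp only [if_pos h]; rw [hz ω h]; ring
      · simp [h]
    · -- fiber over y inside the z-fiber
      have hy : ∀ y : Fin r,
          ∑ ω, (if Y ω = y ∧ Z ω = z then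
            w ω * (((if X ω = j then (1 : ℝ) else 0) - q j z) * RY y z) else 0) = 0 := by
        intro y
        have expand : ∑ ω, (if Y ω = y ∧ Z ω = z then
            w ω * (((if X ω = j then (1 : ℝ) else 0) - q j z) * RY y z) else 0)
          = ((∑ ω, if X ω = j ∧ Y ω = y ∧ Z ω = z then w ω else 0)
              - q j z * (∑ ω, if Y ω = y ∧ Z ω = z then w ω else 0)) * RY y z := by
          have ptw : ∀ ω : Ω, (if Y ω = y ∧ Z ω = z then
              w ω * (((if X ω = j then (1 : ℝ) else 0) - q j z) * RY y z) else 0)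
            = (if X ω = j ∧ Y ω = y ∧ Z ω = z then w ω else 0) * RY y z
              - q j z * ((if Y ω = y ∧ Z ω = z then w ω else 0) * RY y z) := by
            intro ω
            by_cases h1 : Y ω = y ∧ Z ω = z
            · by_cases h2 : X ω = j <;> simp [h1, h2] <;> ring
            · have h3 : ¬(X ω = j ∧ Y ω = y ∧ Z ω = z) := fun h => h1 h.2
              simp [h1, h3]
          simp_rw [ptw]
          rw [Finset.sum_sub_distrib, ← Finset.sum_mul, ← Finset.mul_sum, ← Finset.sum_mul]
          ring
        rw [expand]
        have hA : (∑ ω, if X ω = j ∧ Y ω = y ∧ Z ω = z then w ω else 0)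
            - q j z * (∑ ω, if Y ω = y ∧ Z ω = z then w ω else 0) = 0 := by
          rw [hq j z]
          have := hCI j y z
          field_simp
          linarith [this]
        rw [hA, zero_mul]
      calc ∑ ω, (if Z ω = z then
              w ω * (((if X ω = j then (1 : ℝ) else 0) - q j z) * RY (Y ω) z) else 0)
          = ∑ ω, ∑ y : Fin r, (if Y ω = y ∧ Z ω = z then
              w ω * (((if X ω = j then (1 : ℝ) else 0) - q j z) * RY y z) else 0) := by
            refine Finset.sum_congr rfl fun ω _ => ?_
            by_cases hzz : Z ω = z
            · simp [hzz, Finset.sum_ite_eq]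
            · simp [hzz]
        _ = ∑ y : Fin r, ∑ ω, (if Y ω = y ∧ Z ω = z then
              w ω * (((if X ω = j then (1 : ℝ) else 0) - q j z) * RY y z) else 0) :=
            Finset.sum_comm
        _ = 0 := by simp [hy]
  calc ∑ ω, w ω * (((if X ω = j then (1 : ℝ) else 0) - q j (Z ω)) * RY (Y ω) (Z ω))
      = ∑ ω, ∑ z ∈ Finset.univ.image Z, (if Z ω = z then
          w ω * (((if X ω = j then (1 : ℝ) else 0) - q j z) * RY (Y ω) z) else 0) := by
        refine Finset.sum_congr rfl fun ω _ => ?_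
        rw [Finset.sum_ite_eq (Finset.univ.image Z) (Z ω)]
        simp
    _ = ∑ z ∈ Finset.univ.image Z, ∑ ω, (if Z ω = z then
          w ω * (((if X ω = j then (1 : ℝ) else 0) - q j z) * RY (Y ω) z) else 0) :=
        Finset.sum_comm
    _ = 0 := by simp [fiber]
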